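/- Let a, â be two square-summable families indexed by odd n,m ≥ 1, both satisfying the quadratic identity Σ β_{n,m}(λ+μ+ν β_{n,m})(β_{n,m}−2)|c_{n,m}|² = 0 (with c = a and c = â respectively, and also for any linear combination c = a − t·â), where ν>0, μ≥0, λ+μ+ν/2>0 and β_{n,m}=(n²+m²)/4. If â_{1,1} ≠ 0, then setting t = a_{1,1}/â_{1,1}, the identity applied to a − t·â forces a_{n,m} = t·â_{n,m} for all odd n,m ≥ 1; i.e., a and â are linearly dependent. -/

import Mathlib

/-- β_{n,m} = (n²+m²)/4. -/
noncomputable def beta (n m : ℕ) : ℝ := ((n : ℝ)^2 + (m : ℝ)^2) / 4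

/-- The weight β_{n,m}(λ+μ+ν β_{n,m})(β_{n,m}−2). -/
noncomputable def wgt (lam mu nu : ℝ) (n m : ℕ) : ℝ :=
  beta n m * (lam + mu + nu * beta n m) * (beta n m - 2)

lemma wgt_pos {lam mu nu : ℝ} (hnu : nu > 0) (hpos : lam + mu + nu / 2 > 0)
    {n m : ℕ} (hn : Odd n) (hm : Odd m) (h : ¬(n = 1 ∧ m = 1)) :
    0 < wgt lam mu nu n m := by
  have hn' := Nat.odd_iff.mp hn
  have hm' := Nat.odd_iff.mp hm
  have h10 : 10 ≤ n ^ 2 + m ^ 2 := by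
    have : (3 ≤ n ∧ 1 ≤ m) ∨ (1 ≤ n ∧ 3 ≤ m) := by omega
    rcases this with ⟨h3, h1⟩ | ⟨h1, h3⟩ <;> nlinarith
  have h10' : (10 : ℝ) ≤ (n : ℝ) ^ 2 + (m : ℝ) ^ 2 := by exact_mod_cast h10
  have hb : (5 : ℝ) / 2 ≤ beta n m := by unfold beta; linarith
  have hbpos : 0 < beta n m := by linarith
  have hB : 0 < beta n m - 2 := by linarith
  have hA : 0 < lam + mu + nu * beta n m := by nlinarith
  exact mul_pos (mul_pos hbpos hA) hB

theorem stmt_4 (lam mu nu : ℝ) (hnu : nu > 0) (hmu : mu ≥ 0)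
    (hpos : lam + mu + nu / 2 > 0)
    (a ahat : ℕ → ℕ → ℝ)
    (hasupp : ∀ n m : ℕ, ¬(1 ≤ n ∧ 1 ≤ m ∧ Odd n ∧ Odd m) → a n m = 0)
    (hahatsupp : ∀ n m : ℕ, ¬(1 ≤ n ∧ 1 ≤ m ∧ Odd n ∧ Odd m) → ahat n m = 0)
    (hsumm : ∀ t : ℝ, Summable fun p : ℕ × ℕ =>
      wgt lam mu nu p.1 p.2 * (a p.1 p.2 - t * ahat p.1 p.2) ^ 2)
    (hquad : ∀ t : ℝ,
      ∑' p : ℕ × ℕ, wgt lam mu nu p.1 p.2 * (a p.1 p.2 - t * ahat p.1 p.2) ^ 2 = 0)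
    (hne : ahat 1 1 ≠ 0) :
    ∀ n m : ℕ, Odd n → Odd m → a n m = (a 1 1 / ahat 1 1) * ahat n m := by
  intro n m hn hm
  set t := a 1 1 / ahat 1 1 with ht
  have hc11 : a 1 1 - t * ahat 1 1 = 0 := by
    rw [ht]; field_simp; ring
  have hnonneg : ∀ p : ℕ × ℕ,
      0 ≤ wgt lam mu nu p.1 p.2 * (a p.1 p.2 - t * ahat p.1 p.2) ^ 2 := by
    rintro ⟨x, y⟩
    by_cases hxy : 1 ≤ x ∧ 1 ≤ y ∧ Odd x ∧ Odd y
    · by_cases h11 : x = 1 ∧ y = 1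
      · simp [h11.1, h11.2, hc11]
      · have hw := wgt_pos hnu hpos hxy.2.2.1 hxy.2.2.2 h11
        positivity
    · simp [hasupp x y hxy, hahatsupp x y hxy]
  have key : ∀ p : ℕ × ℕ,
      wgt lam mu nu p.1 p.2 * (a p.1 p.2 - t * ahat p.1 p.2) ^ 2 = 0 := by
    intro p
    have h1 := Summable.le_tsum (hsumm t) p (fun j _ => hnonneg j)
    rw [hquad t] at h1
    exact le_antisymm h1 (hnonneg p)
  by_cases h11 : n = 1 ∧ m = 1
  · rw [h11.1, h11.2]; linarith [hc11]
  · have hw := wgt_pos hnu hpos hn hm h11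
    have h0 := key (n, m)
    simp only at h0
    have : (a n m - t * ahat n m) ^ 2 = 0 := by
      rcases mul_eq_zero.mp h0 with h | h
      · exact absurd h hw.ne'
      · exact h
    have := pow_eq_zero_iff (n := 2) (by norm_num) |>.mp this
    linarith
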